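/- Positional strategies suffice for reachability games on finite arenas: let M be a DFA over the alphabet A × B with finite state type Q. If there exists an agent strategy σag such that for every environment strategy σenv there is k ≥ 1 with M.eval(play(σag, σenv)_{<k}) ∈ M.accept, then there exists a function f : Q → A such that the induced positional strategy Strategy(M, f) has the same property: for every σenv there is k ≥ 1 with M.eval(play(Strategy(M, f), σenv)_{<k}) ∈ M.accept. -/
import Mathlib


/-- The first `k` letters of an infinite trace. -/
def pre {α : Type} (π : ℕ → α) (k : ℕ) : List α := (List.range k).map π

/-- The finite history of pairs of moves after `k` rounds. -/
def playPrefix {A B : Type} (σag : List B → A) (σenv : List A → B) : ℕ → List (A × B)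
  | 0 => []
  | k + 1 =>
      let h := playPrefix σag σenv k
      let a := σag (h.map Prod.snd)
      let b := σenv (h.map Prod.fst ++ [a])
      h ++ [(a, b)]

/-- The infinite play generated by an agent strategy `σag : List B → A`
(the agent moves first) and an environment strategy `σenv : List A → B`:
`a₀ = σag []`, `b₀ = σenv [a₀]`, `a_{i+1} = σag [b₀, …, b_i]`,
`b_{i+1} = σenv [a₀, …, a_{i+1}]`, and `play σag σenv i = (a_i, b_i)`. -/
def play {A B : Type} (σag : List B → A) (σenv : List A → B) (i : ℕ) : A × B :=
  let h := playPrefix σag σenv i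
  let a := σag (h.map Prod.snd)
  let b := σenv (h.map Prod.fst ++ [a])
  (a, b)

/-- Reachability property: some nonempty finite prefix is in `T`. -/
def Reach {A B : Type} (T : Set (List (A × B))) : Set (ℕ → A × B) :=
  {π | ∃ k, 1 ≤ k ∧ pre π k ∈ T}

/-- Safety property: every nonempty finite prefix is in `T`. -/
def Safe {A B : Type} (T : Set (List (A × B))) : Set (ℕ → A × B) :=
  {π | ∀ k, 1 ≤ k → pre π k ∈ T}

/-- The agent strategy `σag` enforces the property `P`. -/
def AgentEnforces {A B : Type} (σag : List B → A) (P : Set (ℕ → A × B)) : Prop :=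
  ∀ σenv : List A → B, play σag σenv ∈ P

/-- The environment strategy `σenv` enforces the property `P`. -/
def EnvEnforces {A B : Type} (σenv : List A → B) (P : Set (ℕ → A × B)) : Prop :=
  ∀ σag : List B → A, play σag σenv ∈ P

/-- The agent strategy `σag` enforces `Task` under the environment
specification `Env`. -/
def EnforcesUnder {A B : Type} (σag : List B → A) (Task Env : Set (ℕ → A × B)) : Prop :=
  ∀ σenv : List A → B, EnvEnforces σenv Env → play σag σenv ∈ Task

/-- The positional agent strategy induced by a DFA `M` over `A × B` and an
output function `f : Q → A`: on an environment-move history `x₀ … x_{k−1}` it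
traverses `q₀ = M.start`, `q_{i+1} = M.step q_i (f q_i, x_i)` and outputs
`f q_k`. -/
def posStrategy {A B Q : Type} (M : DFA (A × B) Q) (f : Q → A) (h : List B) : A :=
  f (h.foldl (fun q x => M.step q (f q, x)) M.start)

section AuxPos
open Classical

variable {A B Q : Type}

/-- Attractor approximations. -/
def RAttr (M : DFA (A × B) Q) : ℕ → Set Q
  | 0 => ∅
  | n + 1 => {q | ∃ a, ∀ b, M.step q (a, b) ∈ M.accept ∨ M.step q (a, b) ∈ RAttr M n}

lemma RAttr_subset_succ (M : DFA (A × B) Q) (n : ℕ) : RAttr M n ⊆ RAttr M (n + 1) := by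
  induction n with
  | zero => intro q hq; exact absurd hq (by simp [RAttr])
  | succ n ih =>
    rintro q ⟨a, ha⟩
    exact ⟨a, fun b => (ha b).imp id (fun hb => ih hb)⟩

lemma RAttr_mono (M : DFA (A × B) Q) {m n : ℕ} (h : m ≤ n) : RAttr M m ⊆ RAttr M n := by
  induction h with
  | refl => exact fun _ h => h
  | step _ ih => exact fun q hq => RAttr_subset_succ M _ (ih hq)

noncomputable def fChoice (M : DFA (A × B) Q) [Nonempty A] (q : Q) : A :=
  if hq : ∃ n, q ∈ RAttr M n then
    if h2 : ∃ a, ∀ b, M.step q (a, b) ∈ M.accept ∨ M.step q (a, b) ∈ RAttr M (Nat.find hq - 1)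
    then h2.choose else Classical.arbitrary A
  else Classical.arbitrary A

lemma fChoice_spec (M : DFA (A × B) Q) [Nonempty A] {q : Q} (hq : ∃ n, q ∈ RAttr M n) :
    ∀ b, M.step q (fChoice M q, b) ∈ M.accept ∨
      M.step q (fChoice M q, b) ∈ RAttr M (Nat.find hq - 1) := by
  have hne : Nat.find hq ≠ 0 := by
    intro h0
    have := Nat.find_spec hq
    rw [h0] at this
    exact absurd this (by simp [RAttr])
  have hmem : q ∈ RAttr M ((Nat.find hq - 1) + 1) := by
    have heq : Nat.find hq - 1 + 1 = Nat.find hq := by omega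
    rw [heq]
    exact Nat.find_spec hq
  obtain ⟨a, ha⟩ := hmem
  have h2 : ∃ a, ∀ b, M.step q (a, b) ∈ M.accept ∨
      M.step q (a, b) ∈ RAttr M (Nat.find hq - 1) := ⟨a, ha⟩
  rw [fChoice, dif_pos hq, dif_pos h2]
  exact h2.choose_spec

noncomputable def escape (M : DFA (A × B) Q) [Nonempty B] (q : Q) (a : A) : B :=
  if h : ∃ b, M.step q (a, b) ∉ M.accept ∧ ∀ n, M.step q (a, b) ∉ RAttr M n
  then h.choose else Classical.arbitrary B

lemma escape_spec (M : DFA (A × B) Q) [Fintype B] [Nonempty B] {q : Q}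
    (hq : ∀ n, q ∉ RAttr M n) (a : A) :
    M.step q (a, escape M q a) ∉ M.accept ∧ ∀ n, M.step q (a, escape M q a) ∉ RAttr M n := by
  have hex : ∃ b, M.step q (a, b) ∉ M.accept ∧ ∀ n, M.step q (a, b) ∉ RAttr M n := by
    by_contra hc
    push_neg at hc
    have hg : ∀ b, ∃ n, M.step q (a, b) ∈ M.accept ∨ M.step q (a, b) ∈ RAttr M n := by
      intro b
      by_cases hb : M.step q (a, b) ∈ M.accept
      · exact ⟨0, Or.inl hb⟩
      · obtain ⟨n, hn⟩ := hc b hb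
        exact ⟨n, Or.inr hn⟩
    choose g hgspec using hg
    have : q ∈ RAttr M (Finset.univ.sup g + 1) := by
      refine ⟨a, fun b => (hgspec b).imp id (fun hb => ?_)⟩
      exact RAttr_mono M (Finset.le_sup (Finset.mem_univ b)) hb
    exact hq _ this
  rw [escape, dif_pos hex]
  exact hex.choose_spec

lemma pre_succ {α : Type} (π : ℕ → α) (k : ℕ) : pre π (k + 1) = pre π k ++ [π k] := by
  simp [pre, List.range_succ]

lemma playPrefix_succ (σag : List B → A) (σenv : List A → B) (k : ℕ) :
    playPrefix σag σenv (k + 1) = playPrefix σag σenv k ++ [play σag σenv k] := rfl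

lemma playPrefix_eq_pre (σag : List B → A) (σenv : List A → B) :
    ∀ k, playPrefix σag σenv k = pre (play σag σenv) k := by
  intro k
  induction k with
  | zero => simp [pre, playPrefix]
  | succ k ih => rw [playPrefix_succ, pre_succ, ih]

lemma eval_playPrefix_succ (M : DFA (A × B) Q) (σag : List B → A) (σenv : List A → B) (k : ℕ) :
    M.eval (playPrefix σag σenv (k + 1))
      = M.step (M.eval (playPrefix σag σenv k)) (play σag σenv k) := by
  rw [playPrefix_succ]
  exact M.eval_append_singleton _ _

lemma posState (M : DFA (A × B) Q) [Nonempty A] (f : Q → A) (σenv : List A → B) :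
    ∀ k, ((playPrefix (posStrategy M f) σenv k).map Prod.snd).foldl
        (fun q x => M.step q (f q, x)) M.start
      = M.eval (playPrefix (posStrategy M f) σenv k) := by
  intro k
  induction k with
  | zero => rfl
  | succ k ih =>
    have ha : (play (posStrategy M f) σenv k).1
        = f (M.eval (playPrefix (posStrategy M f) σenv k)) := by
      show posStrategy M f ((playPrefix (posStrategy M f) σenv k).map Prod.snd) = _
      rw [posStrategy, ih]
    rw [playPrefix_succ, List.map_append, List.foldl_append]
    simp only [List.map_cons, List.map_nil, List.foldl_cons, List.foldl_nil]
    rw [ih, M.eval_append_singleton, ← ha]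

lemma reach_aux (M : DFA (A × B) Q) [Nonempty A] (σenv : List A → B) :
    ∀ n k, M.eval (playPrefix (posStrategy M (fChoice M)) σenv k) ∈ RAttr M n →
      ∃ j, k < j ∧ M.eval (playPrefix (posStrategy M (fChoice M)) σenv j) ∈ M.accept := by
  intro n
  induction n using Nat.strong_induction_on with
  | _ n ih =>
    intro k hk
    have hq : ∃ n', M.eval (playPrefix (posStrategy M (fChoice M)) σenv k) ∈ RAttr M n' := ⟨n, hk⟩
    have hfind : Nat.find hq ≤ n := Nat.find_min' hq hk
    have hpos : 0 < Nat.find hq := by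
      rcases Nat.eq_zero_or_pos (Nat.find hq) with h0 | h0
      · have := Nat.find_spec hq
        rw [h0] at this
        exact absurd this (by simp [RAttr])
      · exact h0
    have ha : (play (posStrategy M (fChoice M)) σenv k).1
        = fChoice M (M.eval (playPrefix (posStrategy M (fChoice M)) σenv k)) := by
      show posStrategy M (fChoice M)
        ((playPrefix (posStrategy M (fChoice M)) σenv k).map Prod.snd) = _
      rw [posStrategy, posState]
    have hstep : M.eval (playPrefix (posStrategy M (fChoice M)) σenv (k + 1))
        = M.step (M.eval (playPrefix (posStrategy M (fChoice M)) σenv k))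
            (fChoice M (M.eval (playPrefix (posStrategy M (fChoice M)) σenv k)),
             (play (posStrategy M (fChoice M)) σenv k).2) := by
      rw [eval_playPrefix_succ, ← ha]
    rcases fChoice_spec M hq ((play (posStrategy M (fChoice M)) σenv k).2) with hacc | hR
    · exact ⟨k + 1, Nat.lt_succ_self k, by rw [hstep]; exact hacc⟩
    · obtain ⟨j, hj, hjacc⟩ :=
        ih (Nat.find hq - 1) (lt_of_lt_of_le (Nat.sub_lt hpos one_pos) hfind) (k + 1)
          (by rw [hstep]; exact hR)
      exact ⟨j, lt_trans (Nat.lt_succ_self k) hj, hjacc⟩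

lemma start_mem_attr (M : DFA (A × B) Q) [Fintype B] [Nonempty A] [Nonempty B]
    (h : ∃ σag : List B → A, ∀ σenv : List A → B,
      ∃ k, 1 ≤ k ∧ M.eval (pre (play σag σenv) k) ∈ M.accept) :
    ∃ n, M.start ∈ RAttr M n := by
  by_contra hU
  push_neg at hU
  obtain ⟨σag, hσ⟩ := h
  set σenv : List A → B := fun as =>
    escape M ((as.dropLast).foldl (fun q a => M.step q (a, escape M q a)) M.start)
      (as.getLastD (Classical.arbitrary A)) with hσenv
  have inv : ∀ k,
      ((playPrefix σag σenv k).map Prod.fst).foldl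
          (fun q a => M.step q (a, escape M q a)) M.start
        = M.eval (playPrefix σag σenv k)
      ∧ (∀ n, M.eval (playPrefix σag σenv k) ∉ RAttr M n)
      ∧ (1 ≤ k → M.eval (playPrefix σag σenv k) ∉ M.accept) := by
    intro k
    induction k with
    | zero => exact ⟨rfl, hU, fun hk => absurd hk (by omega)⟩
    | succ k ih =>
      obtain ⟨ihst, ihU, -⟩ := ih
      have hb : (play σag σenv k).2
          = escape M (M.eval (playPrefix σag σenv k))
              ((play σag σenv k).1) := by
        show σenv ((playPrefix σag σenv k).map Prod.fst ++ [(play σag σenv k).1]) = _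
        rw [hσenv]
        simp only [List.dropLast_concat, List.getLastD_concat]
        rw [ihst]
      have hstep : M.eval (playPrefix σag σenv (k + 1))
          = M.step (M.eval (playPrefix σag σenv k))
              ((play σag σenv k).1,
               escape M (M.eval (playPrefix σag σenv k)) ((play σag σenv k).1)) := by
        rw [eval_playPrefix_succ, ← hb]
      have hesc := escape_spec M ihU ((play σag σenv k).1)
      refine ⟨?_, ?_, fun _ => ?_⟩
      · rw [playPrefix_succ, List.map_append, List.foldl_append]
        simp only [List.map_cons, List.map_nil, List.foldl_cons, List.foldl_nil]
        rw [ihst, M.eval_append_singleton, ← hb]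
      · rw [hstep]; exact hesc.2
      · rw [hstep]; exact hesc.1
  obtain ⟨k, hk1, hkacc⟩ := hσ σenv
  rw [← playPrefix_eq_pre] at hkacc
  exact (inv k).2.2 hk1 hkacc

end AuxPos

/-- Positional strategies suffice for reachability games on finite arenas: if
some agent strategy guarantees that against every environment strategy the run
of the play in `M` visits `M.accept` at some time `k ≥ 1`, then some positional
strategy induced by a function `f : Q → A` does so as well. -/
theorem positional_suffices_reach {A B Q : Type}
    [Fintype A] [Fintype B] [Nonempty A] [Nonempty B] [Fintype Q]
    (M : DFA (A × B) Q)
    (h : ∃ σag : List B → A, ∀ σenv : List A → B,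
      ∃ k, 1 ≤ k ∧ M.eval (pre (play σag σenv) k) ∈ M.accept) :
    ∃ f : Q → A, ∀ σenv : List A → B,
      ∃ k, 1 ≤ k ∧ M.eval (pre (play (posStrategy M f) σenv) k) ∈ M.accept := by
  obtain ⟨n, hn⟩ := start_mem_attr M h
  refine ⟨fChoice M, fun σenv => ?_⟩
  obtain ⟨j, hj, hacc⟩ := reach_aux M σenv n 0 hn
  exact ⟨j, hj, by rwa [← playPrefix_eq_pre]⟩
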